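/- Let $g : [0,T] \to \mathbb{R}$ be càdlàg, $C_t = \sup_{t \le s \le T} g(s)$, and let $\mu$ be the (nonnegative) Stieltjes measure associated with the nonincreasing function $C$ (i.e., $\mu((a,b]) = C_a - C_b$). Then $\mu$ is carried by the set $\{s : C_{s-} = g(s-)\}$; equivalently, $\int_0^T \mathbf{1}_{\{C_{s-} > g(s-)\}}\, d\mu(s) = 0$. -/

import Mathlib

open Set Filter

section AuxFlatOff

open MeasureTheory

/-- Covering lemma: if every point `s` of `S` has an interval `(a s, s]` of `μ`-measure zero,
then `μ S = 0`. -/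
lemma null_of_Ioc_cover (μ : MeasureTheory.Measure ℝ) (S : Set ℝ) (a : ℝ → ℝ)
    (ha : ∀ s ∈ S, a s < s) (h0 : ∀ s ∈ S, μ (Ioc (a s) s) = 0) : μ S = 0 := by
  classical
  set V : Set ℝ := ⋃ s ∈ S, Ioo (a s) s with hV
  have hVnull : μ V = 0 := by
    obtain ⟨Tc, hTc, hTeq⟩ := TopologicalSpace.isOpen_iUnion_countable
      (fun s : S => Ioo (a s) (s : ℝ)) (fun s => isOpen_Ioo)
    have : V = ⋃ s ∈ Tc, Ioo (a s) (s : ℝ) := by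
      rw [hTeq]
      simp [hV, iUnion_coe_set]
    rw [this]
    refine (measure_biUnion_null_iff hTc).mpr fun s _ => ?_
    exact measure_mono_null Ioo_subset_Ioc_self (h0 s s.2)
  set E : Set ℝ := S \ V with hE
  have hEc : E.Countable := by
    have : ∀ s ∈ E, ∃ q : ℚ, (q : ℝ) ∈ Ioo (a s) s := by
      intro s hs
      exact exists_rat_btwn (ha s hs.1)
    choose! q hq using this
    refine Set.MapsTo.countable_of_injOn (f := q) (t := (univ : Set ℚ))
      (fun s _ => mem_univ _) ?_ countable_univ
    intro s1 h1 s2 h2 heq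
    by_contra hne
    rcases lt_or_gt_of_ne hne with h | h
    · have hs1 : s1 ≤ a s2 := by
        by_contra hgt
        exact h1.2 (mem_biUnion h2.1 ⟨lt_of_not_ge hgt, h⟩)
      have : (q s1 : ℝ) < q s2 := lt_of_lt_of_le (hq s1 h1).2 (hs1.trans (hq s2 h2).1.le)
      rw [heq] at this; exact lt_irrefl _ this
    · have hs2 : s2 ≤ a s1 := by
        by_contra hgt
        exact h2.2 (mem_biUnion h1.1 ⟨lt_of_not_ge hgt, h⟩)
      have : (q s2 : ℝ) < q s1 := lt_of_lt_of_le (hq s2 h2).2 (hs2.trans (hq s1 h1).1.le)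
      rw [heq] at this; exact lt_irrefl _ this
  have hEnull : μ E = 0 := by
    have : E = ⋃ s ∈ E, {s} := by simp
    rw [this]
    refine (measure_biUnion_null_iff hEc).mpr fun s hs => ?_
    refine measure_mono_null ?_ (h0 s hs.1)
    simp [Set.singleton_subset_iff, (ha s hs.1), le_refl]
  have hsub : S ⊆ V ∪ E := fun s hs => by
    by_cases h : s ∈ V
    · exact Or.inl h
    · exact Or.inr ⟨hs, h⟩
  exact measure_mono_null hsub (measure_union_null hVnull hEnull)

end AuxFlatOff

/-- The Stieltjes measure `μ` of the nonincreasing right-continuous future-supremum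
`C t = sup_{t ≤ s ≤ T} g s` (realized via the nondecreasing Stieltjes function
`F = -C`) is carried by the set `{s : C_{s-} = g(s-)}`:
`μ {s ∈ (0,T] : C_{s-} > g(s-)} = 0`. -/
theorem futureSup_stieltjes_flat_off
    (T : ℝ) (hT : 0 < T) (g C : ℝ → ℝ)
    (hrc : ∀ t ∈ Ico (0:ℝ) T, Tendsto g (nhdsWithin t (Ioi t)) (nhds (g t)))
    (hll : ∀ t ∈ Ioc (0:ℝ) T, ∃ l, Tendsto g (nhdsWithin t (Iio t)) (nhds l))
    (hC : ∀ t ∈ Icc (0:ℝ) T, C t = sSup (g '' Icc t T))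
    (Cm gm : ℝ → ℝ)
    (hCm : ∀ s ∈ Ioc (0:ℝ) T, Tendsto C (nhdsWithin s (Iio s)) (nhds (Cm s)))
    (hgm : ∀ s ∈ Ioc (0:ℝ) T, Tendsto g (nhdsWithin s (Iio s)) (nhds (gm s)))
    (F : StieltjesFunction ℝ) (hF : ∀ t ∈ Icc (0:ℝ) T, F t = -C t) :
    F.measure {s ∈ Ioc (0:ℝ) T | gm s < Cm s} = 0 := by
  classical
  -- g is bounded above on [0,T]
  have hbddAll : BddAbove (g '' Icc (0:ℝ) T) := by
    refine IsCompact.induction_on isCompact_Icc (by simp)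
      (fun s t hst ht => ht.mono (image_mono (f := g) hst))
      (fun s t hs ht => by rw [image_union]; exact hs.union ht) ?_
    intro x hx
    obtain ⟨ML, hL⟩ : ∃ ML, ∀ᶠ y in nhdsWithin x (Iio x), y ∈ Icc (0:ℝ) T → g y ≤ ML := by
      by_cases hx0 : 0 < x
      · obtain ⟨l, hl⟩ := hll x ⟨hx0, hx.2⟩
        exact ⟨l + 1, (hl.eventually_lt_const (lt_add_one l)).mono fun y hy _ => hy.le⟩
      · refine ⟨0, ?_⟩
        filter_upwards [self_mem_nhdsWithin] with y hy hyI
        exact absurd hyI.1 (not_le.mpr (hy.trans_le (not_lt.mp hx0)))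
    obtain ⟨MR, hR⟩ : ∃ MR, ∀ᶠ y in nhdsWithin x (Ioi x), y ∈ Icc (0:ℝ) T → g y ≤ MR := by
      by_cases hxT : x < T
      · exact ⟨g x + 1,
          (((hrc x ⟨hx.1, hxT⟩)).eventually_lt_const (lt_add_one _)).mono fun y hy _ => hy.le⟩
      · refine ⟨0, ?_⟩
        filter_upwards [self_mem_nhdsWithin] with y hy hyI
        exact absurd hyI.2 (not_le.mpr (lt_of_le_of_lt (not_lt.mp hxT) hy))
    set M := max (g x) (max ML MR) with hMdef
    have hev : ∀ᶠ y in nhds x, y ∈ Icc (0:ℝ) T → g y ≤ M := by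
      have h1 : nhdsWithin x (Iio x) ⊔ (pure x ⊔ nhdsWithin x (Ioi x)) = nhds x := by
        rw [← nhdsWithin_singleton x, ← nhdsWithin_union, singleton_union, Ioi_insert,
          nhdsLT_sup_nhdsGE]
      rw [← h1, eventually_sup, eventually_sup, eventually_pure]
      refine ⟨hL.mono fun y hy hyI => (hy hyI).trans ((le_max_left ML MR).trans (le_max_right _ _)),
        fun _ => le_max_left _ _,
        hR.mono fun y hy hyI => (hy hyI).trans ((le_max_right ML MR).trans (le_max_right _ _))⟩
    refine ⟨{y | g y ≤ M}, eventually_nhdsWithin_iff.mpr hev, ⟨M, ?_⟩⟩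
    rintro z ⟨y, hy, rfl⟩
    exact hy
  have hne : ∀ t ∈ Icc (0:ℝ) T, (g '' Icc t T).Nonempty :=
    fun t ht => ⟨g T, mem_image_of_mem g ⟨ht.2, le_refl T⟩⟩
  have hbdd : ∀ t ∈ Icc (0:ℝ) T, BddAbove (g '' Icc t T) :=
    fun t ht => hbddAll.mono (image_mono (f := g) (Icc_subset_Icc_left ht.1))
  have hmono : ∀ t1 ∈ Icc (0:ℝ) T, ∀ t2 ∈ Icc (0:ℝ) T, t1 ≤ t2 → C t2 ≤ C t1 := by
    intro t1 h1 t2 h2 h12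
    rw [hC t1 h1, hC t2 h2]
    exact csSup_le_csSup (hbdd t1 h1) (hne t2 h2) (image_mono (f := g) (Icc_subset_Icc_left h12))
  have hub : ∀ t ∈ Icc (0:ℝ) T, ∀ u ∈ Icc t T, g u ≤ C t := by
    intro t ht u hu
    rw [hC t ht]
    exact le_csSup (hbdd t ht) (mem_image_of_mem g hu)
  have hlub : ∀ t ∈ Icc (0:ℝ) T, ∀ b, (∀ u ∈ Icc t T, g u ≤ b) → C t ≤ b := by
    intro t ht b hb
    rw [hC t ht]
    exact csSup_le (hne t ht) (by rintro y ⟨u, hu, rfl⟩; exact hb u hu)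
  have key : ∀ s, s ∈ Ioc (0:ℝ) T → gm s < Cm s →
      ∃ a, a < s ∧ F.measure (Ioc a s) = 0 := by
    intro s hs hgc
    have hs0 : 0 < s := hs.1
    have hsT : s ≤ T := hs.2
    have hsI : s ∈ Icc (0:ℝ) T := ⟨hs0.le, hsT⟩
    have hCmle : ∀ t, 0 ≤ t → t < s → Cm s ≤ C t := by
      intro t ht0 hts
      refine le_of_tendsto (hCm s hs) ?_
      filter_upwards [Ioo_mem_nhdsLT_of_mem (⟨hts, le_refl s⟩ : s ∈ Ioc t s)] with t' ht'
      exact hmono t ⟨ht0, hts.le.trans hsT⟩ t' ⟨ht0.trans ht'.1.le, ht'.2.le.trans hsT⟩ ht'.1.le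
    set ε := (Cm s - gm s) / 2 with hεdef
    have hε : 0 < ε := by rw [hεdef]; linarith
    have hev : ∀ᶠ t in nhdsWithin s (Iio s), g t < Cm s - ε :=
      (hgm s hs).eventually_lt_const (by rw [hεdef]; linarith)
    obtain ⟨a0, ha0, hsub⟩ := mem_nhdsLT_iff_exists_Ioo_subset.mp hev
    set a1 := max a0 0 with ha1def
    have ha1s : a1 < s := max_lt ha0 hs0
    have ha10 : 0 ≤ a1 := le_max_right _ _
    have hCub : ∀ t, a1 < t → t < s → C t ≤ max (Cm s - ε) (C s) := by
      intro t hat hts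
      refine hlub t ⟨ha10.trans hat.le, hts.le.trans hsT⟩ _ ?_
      intro u hu
      rcases lt_or_ge u s with h | h
      · have hmem : u ∈ Ioo a0 s := ⟨(le_max_left a0 0).trans_lt (hat.trans_le hu.1), h⟩
        exact (hsub hmem).le.trans (le_max_left _ _)
      · exact (hub s hsI u ⟨h, hu.2⟩).trans (le_max_right _ _)
    set t0 := (a1 + s) / 2 with ht0def
    have hmid1 : a1 < t0 := by rw [ht0def]; linarith
    have hmid2 : t0 < s := by rw [ht0def]; linarith
    have ht00 : 0 ≤ t0 := ha10.trans hmid1.le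
    have ht0I : t0 ∈ Icc (0:ℝ) T := ⟨ht00, hmid2.le.trans hsT⟩
    have h1 : Cm s ≤ C t0 := hCmle t0 ht00 hmid2
    have h2 : C t0 ≤ max (Cm s - ε) (C s) := hCub t0 hmid1 hmid2
    have hCms_le : Cm s ≤ C s := by
      rcases le_max_iff.mp (h1.trans h2) with h | h
      · linarith
      · exact h
    have hto : C t0 ≤ C s := h2.trans_eq (max_eq_right (by linarith))
    have hst : C s ≤ C t0 := hmono t0 ht0I s hsI hmid2.le
    refine ⟨t0, hmid2, ?_⟩
    rw [F.measure_Ioc, hF s hsI, hF t0 ht0I]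
    have heq : C t0 = C s := le_antisymm hto hst
    rw [heq]
    simp
  have key2 : ∀ s ∈ {s ∈ Ioc (0:ℝ) T | gm s < Cm s},
      ∃ a, a < s ∧ F.measure (Ioc a s) = 0 := fun s hs => key s hs.1 hs.2
  choose! a haa hnull using key2
  exact null_of_Ioc_cover F.measure _ a haa hnull
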